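/- If g ∈ S_n has orbits O_1,...,O_k on {1,...,n} of pairwise distinct sizes t_1,...,t_k, then any nilpotent subgroup N of S_n containing g stabilizes each orbit O_i setwise; that is, N ≤ Sym(O_1) × Sym(O_2) × ⋯ × Sym(O_k). -/

import Mathlib

theorem nilpotent_stabilizes_orbits_of_distinct_sizes {n : ℕ}
    (g : Equiv.Perm (Fin n))
    (hdist : ∀ x y : Fin n,
      Nat.card {z : Fin n // g.SameCycle x z} = Nat.card {z : Fin n // g.SameCycle y z} →
        g.SameCycle x y)
    (N : Subgroup (Equiv.Perm (Fin n))) (hN : Group.IsNilpotent N) (hgN : g ∈ N) :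
    ∀ h ∈ N, ∀ x : Fin n, g.SameCycle x (h x) := by
  -- The subgroup of N consisting of elements preserving each g-cycle
  set H : Subgroup N := {
    carrier := {h : N | ∀ x : Fin n, g.SameCycle x ((h : Equiv.Perm (Fin n)) x)}
    one_mem' := by intro x; exact Equiv.Perm.SameCycle.refl g x
    mul_mem' := by
      intro a b ha hb x
      have h1 := hb x
      have h2 := ha ((b : Equiv.Perm (Fin n)) x)
      simpa using h1.trans h2
    inv_mem' := by
      intro a ha x
      have := ha (((a⁻¹ : N) : Equiv.Perm (Fin n)) x)
      simp only [Subgroup.coe_inv] at this ⊢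
      simpa using this.symm }
  have hgH : (⟨g, hgN⟩ : N) ∈ H := by
    intro x
    exact ⟨1, by simp⟩
  -- key step: if h normalizes H then h ∈ H
  have key : ∀ h : N, h ∈ Subgroup.normalizer (H : Set N) → h ∈ H := by
    intro h hmem
    have hconj : h * ⟨g, hgN⟩ * h⁻¹ ∈ H := (Subgroup.mem_normalizer_iff.mp hmem _).mp hgH
    set hp : Equiv.Perm (Fin n) := (h : Equiv.Perm (Fin n)) with hhp
    -- h maps the g-cycle relation forward
    have step : ∀ x : Fin n, g.SameCycle (hp x) (hp (g x)) := by
      intro x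
      have := hconj (hp x)
      simpa [hp, mul_assoc] using this
    have forward : ∀ x y : Fin n, g.SameCycle x y → g.SameCycle (hp x) (hp y) := by
      intro x y hxy
      obtain ⟨i, -, -, hi⟩ := hxy.exists_pow_eq
      subst hi
      clear hxy
      induction i with
      | zero => exact Equiv.Perm.SameCycle.refl g (hp x)
      | succ i ih =>
        have hst : g.SameCycle (hp ((g ^ i) x)) (hp (g ((g ^ i) x))) := step _
        have h2 := ih.trans hst
        have heq : g ((g ^ i) x) = (g ^ (i + 1)) x := by
          rw [pow_succ', Equiv.Perm.mul_apply]
        rwa [heq] at h2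
    -- cycle sizes are monotone along hp
    have mono : ∀ x : Fin n,
        Nat.card {z : Fin n // g.SameCycle x z} ≤
          Nat.card {z : Fin n // g.SameCycle (hp x) z} := by
      intro x
      apply Nat.card_le_card_of_injective
        (f := fun z : {z : Fin n // g.SameCycle x z} =>
          (⟨hp z.1, forward x z.1 z.2⟩ : {z : Fin n // g.SameCycle (hp x) z}))
      intro a b hab
      have : hp a.1 = hp b.1 := congrArg Subtype.val hab
      exact Subtype.ext (hp.injective this)
    -- iterate: sizes along x, hp x, hp² x, ... are monotone and cyclic
    intro x
    apply hdist
    have iter : ∀ k : ℕ, ∀ y : Fin n,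
        Nat.card {z : Fin n // g.SameCycle y z} ≤
          Nat.card {z : Fin n // g.SameCycle ((hp ^ k) y) z} := by
      intro k
      induction k with
      | zero => intro y; simp
      | succ k ih =>
        intro y
        calc Nat.card {z : Fin n // g.SameCycle y z}
            ≤ Nat.card {z : Fin n // g.SameCycle (hp y) z} := mono y
          _ ≤ Nat.card {z : Fin n // g.SameCycle ((hp ^ k) (hp y)) z} := ih (hp y)
          _ = Nat.card {z : Fin n // g.SameCycle ((hp ^ (k + 1)) y) z} := by
              rw [pow_succ, Equiv.Perm.mul_apply]
    have hord : orderOf hp ≠ 0 := (orderOf_pos hp).ne'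
    obtain ⟨m, hm⟩ : ∃ m, orderOf hp = m + 1 := Nat.exists_eq_succ_of_ne_zero hord
    have hcycle : (hp ^ (orderOf hp)) x = x := by rw [pow_orderOf_eq_one]; simp
    have h1 : Nat.card {z : Fin n // g.SameCycle (hp x) z} ≤
        Nat.card {z : Fin n // g.SameCycle x z} := by
      have := iter m (hp x)
      have heq : (hp ^ m) (hp x) = x := by
        have : (hp ^ (m + 1)) x = x := by rw [← hm]; exact hcycle
        rw [pow_succ, Equiv.Perm.mul_apply] at this
        exact this
      rwa [heq] at this
    exact le_antisymm (mono x) h1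
  -- conclude H = ⊤ using the normalizer condition
  have hHtop : H = ⊤ := by
    by_contra hne
    have hlt : H < ⊤ := lt_of_le_of_ne le_top hne
    have hnc : NormalizerCondition N := normalizerCondition_of_isNilpotent
    obtain ⟨h, hmem, hnot⟩ := SetLike.exists_of_lt (hnc H hlt)
    exact hnot (key h hmem)
  intro h hhN x
  have : (⟨h, hhN⟩ : N) ∈ H := hHtop ▸ Subgroup.mem_top _
  exact this x
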